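/- For α, β ∈ 𝔻 and m, n ∈ ℕ, the H² inner product ⟨k_{α,m}, k_{β,n}⟩ equals the complex conjugate of the coefficient a_{mn} in the double expansion 1/(1 − z conj(ζ)) = Σ_{k,l≥0} a_{kl} (z−α)^k conj(ζ−β)^l. Consequently, the Gram matrix G of the kernels {k_{α_i,m}} equals the entrywise conjugate of Takahashi's matrix Γ built from these coefficients. -/

import Mathlib

open Complex Metric

/-- The Taylor-coefficient reproducing kernel in H². -/


noncomputable def kern (α : ℂ) (m : ℕ) (z : ℂ) : ℂ :=
  z ^ m / (1 - (starRingEnd ℂ) α * z) ^ (m + 1)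

lemma kern_hasSum (α ζ : ℂ) (m : ℕ) (h : ‖(starRingEnd ℂ) α * ζ‖ < 1) :
    HasSum (fun p : ℕ => ((p + m).choose m : ℂ) * ((starRingEnd ℂ) α * ζ) ^ p * ζ ^ m)
      (kern α m ζ) := by
  have := (hasSum_choose_mul_geometric_of_norm_lt_one m h).mul_right (ζ ^ m)
  convert this using 1
  · rfl
  rw [kern]; ring

lemma coeff_unique {f : ℂ → ℂ} {x : ℂ} {r : ℝ} (hr : 0 < r) {c d : ℕ → ℂ}
    (hc : ∀ w : ℂ, ‖w‖ < r → HasSum (fun k => c k * w ^ k) (f (x + w)))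
    (hd : ∀ w : ℂ, ‖w‖ < r → HasSum (fun k => d k * w ^ k) (f (x + w))) :
    c = d := by
  have key : ∀ (c : ℕ → ℂ),
      (∀ w : ℂ, ‖w‖ < r → HasSum (fun k => c k * w ^ k) (f (x + w))) →
      HasFPowerSeriesAt f (FormalMultilinearSeries.ofScalars ℂ c) x := by
    intro c hc
    refine ⟨(r/2).toNNReal, ?_, ?_, ?_⟩
    · apply FormalMultilinearSeries.le_radius_of_tendsto _ (l := 0)
      have h0 : HasSum (fun k => c k * ((r/2 : ℝ) : ℂ) ^ k)
          (f (x + ((r/2 : ℝ) : ℂ))) := by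
        apply hc
        rw [Complex.norm_real, Real.norm_eq_abs, abs_of_pos (by linarith)]
        linarith
      have h1 := (h0.summable.tendsto_atTop_zero).norm
      simp only [norm_zero] at h1
      convert h1 using 2 with k
      rw [FormalMultilinearSeries.ofScalars_norm, norm_mul, norm_pow, Complex.norm_real,
        Real.norm_eq_abs, abs_of_pos (by linarith : (0:ℝ) < r/2),
        Real.coe_toNNReal _ (by linarith : (0:ℝ) ≤ r/2)]
    · simp only [ENNReal.coe_pos, Real.toNNReal_pos]
      linarith
    · intro y hy
      rw [EMetric.mem_ball, edist_zero_right] at hy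
      have hy2 : ‖y‖₊ < (r/2).toNNReal := by exact_mod_cast hy
      have hy3 : ‖y‖ < r := by
        have := (NNReal.coe_lt_coe.mpr hy2)
        rw [coe_nnnorm, Real.coe_toNNReal _ (by linarith : (0:ℝ) ≤ r/2)] at this
        linarith
      have h := hc y hy3
      have heq : (fun k : ℕ => FormalMultilinearSeries.ofScalars ℂ c k fun _ => y)
          = fun k : ℕ => c k * y ^ k := by
        funext k
        rw [FormalMultilinearSeries.ofScalars_apply_eq, smul_eq_mul]
      rw [heq]
      exact h
  have := (key c hc).eq_formalMultilinearSeries (key d hd)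
  exact FormalMultilinearSeries.ofScalars_series_injective ℂ ℂ this

lemma one_div_hasSum (w x z : ℂ) (hx : ‖x * w‖ < 1) (hu : ‖w * (z - x)‖ < ‖1 - x * w‖) :
    HasSum (fun k : ℕ => w ^ k / (1 - x * w) ^ (k + 1) * (z - x) ^ k) (1 / (1 - z * w)) := by
  have hy : (1 : ℂ) - x * w ≠ 0 := by
    intro h
    rw [sub_eq_zero] at h
    rw [← h] at hx
    simp at hx
  set u := w * (z - x) / (1 - x * w) with hu_def
  have hu1 : ‖u‖ < 1 := by
    rw [hu_def, norm_div, div_lt_one (norm_pos_iff.mpr (sub_ne_zero.mpr ?_))]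
    · exact hu
    · intro h; exact hy (by rw [h]; ring)
  have hg := (hasSum_geometric_of_norm_lt_one hu1).mul_left ((1 - x * w)⁻¹)
  have hid : (1 - x * w) * (1 - u) = 1 - z * w := by
    rw [hu_def]; field_simp; ring
  have hterm : (fun k : ℕ => (1 - x * w)⁻¹ * u ^ k)
      = fun k : ℕ => w ^ k / (1 - x * w) ^ (k + 1) * (z - x) ^ k := by
    funext k
    rw [hu_def, div_pow, mul_pow]
    field_simp
    ring
  rw [hterm] at hg
  convert hg using 1
  · rfl
  rw [← hid, one_div, mul_inv]


lemma orth (k : ℤ) : (∫ θ in (0:ℝ)..(2*Real.pi), Complex.exp (k * θ * Complex.I))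
    = if k = 0 then ((2*Real.pi : ℝ) : ℂ) else 0 := by
  rcases eq_or_ne k 0 with hk | hk
  · simp [hk]
  · rw [if_neg hk]
    have hrw : ∀ θ : ℝ, (k : ℂ) * θ * Complex.I = (k * Complex.I) * θ := fun θ => by ring
    simp_rw [hrw]
    rw [integral_exp_mul_complex (by simp [hk, Complex.I_ne_zero])]
    have h1 : Complex.exp (↑k * Complex.I * ↑(2 * Real.pi)) = 1 := by
      rw [show (k : ℂ) * Complex.I * ((2 * Real.pi : ℝ) : ℂ) = k * (2 * Real.pi * Complex.I) by
        push_cast; ring]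
      exact Complex.exp_int_mul_two_pi_mul_I k
    rw [h1]
    simp




lemma integral_hasSum (α β : ℂ) (hα : ‖α‖ < 1) (hβ : ‖β‖ < 1) (m n : ℕ) :
    HasSum (fun pq : ℕ × ℕ =>
      if ((m + pq.1 : ℤ) = (n + pq.2 : ℤ)) then
        ((2*Real.pi : ℝ) : ℂ) * (((pq.1+m).choose m : ℂ) * ((pq.2+n).choose n : ℂ) *
          ((starRingEnd ℂ) α)^pq.1 * β^pq.2)
      else 0)
    (∫ θ in (0:ℝ)..(2*Real.pi), kern α m (Complex.exp (θ*Complex.I)) *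
       (starRingEnd ℂ) (kern β n (Complex.exp (θ*Complex.I)))) := by
  set E : ℝ → ℂ := fun θ => Complex.exp (θ * Complex.I) with hE
  have hE1 : ∀ θ : ℝ, ‖E θ‖ = 1 := fun θ => by
    rw [hE]; exact Complex.norm_exp_ofReal_mul_I θ
  have hEc : Continuous E := Complex.continuous_exp.comp (Complex.continuous_ofReal.mul continuous_const)
  set F : ℕ × ℕ → ℝ → ℂ := fun pq θ =>
    (((pq.1+m).choose m : ℂ) * ((starRingEnd ℂ) α * E θ) ^ pq.1 * (E θ) ^ m) *
      (starRingEnd ℂ) (((pq.2+n).choose n : ℂ) * ((starRingEnd ℂ) β * E θ) ^ pq.2 * (E θ) ^ n)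
    with hF
  have hnormF : ∀ pq : ℕ × ℕ, ∀ θ : ℝ, ‖F pq θ‖ =
      ((pq.1+m).choose m : ℝ) * ‖α‖ ^ pq.1 * (((pq.2+n).choose n : ℝ) * ‖β‖ ^ pq.2) := by
    intro pq θ
    simp [hF, norm_mul, norm_pow, hE1, RCLike.norm_conj]
  have Sa : Summable (fun p : ℕ => ((p+m).choose m : ℝ) * ‖α‖ ^ p) := by
    have := summable_choose_mul_geometric_of_norm_lt_one (R := ℝ) m
      (r := ‖α‖) (by rwa [Real.norm_eq_abs, abs_norm])
    exact this
  have Sb : Summable (fun q : ℕ => ((q+n).choose n : ℝ) * ‖β‖ ^ q) := by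
    have := summable_choose_mul_geometric_of_norm_lt_one (R := ℝ) n
      (r := ‖β‖) (by rwa [Real.norm_eq_abs, abs_norm])
    exact this
  have Sbound : Summable (fun pq : ℕ × ℕ =>
      ((pq.1+m).choose m : ℝ) * ‖α‖ ^ pq.1 * (((pq.2+n).choose n : ℝ) * ‖β‖ ^ pq.2)) :=
    Sa.mul_of_nonneg Sb (fun p => by positivity) (fun q => by positivity)
  have hlim : ∀ θ : ℝ, HasSum (fun pq => F pq θ)
      (kern α m (E θ) * (starRingEnd ℂ) (kern β n (E θ))) := by
    intro θ
    simp only [hF]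
    have h1 : HasSum (fun p : ℕ => ((p + m).choose m : ℂ) * ((starRingEnd ℂ) α * E θ) ^ p * (E θ) ^ m)
        (kern α m (E θ)) := kern_hasSum α (E θ) m (by rw [norm_mul, hE1]; simpa using hα)
    have h2 : HasSum (fun q : ℕ => ((q + n).choose n : ℂ) * ((starRingEnd ℂ) β * E θ) ^ q * (E θ) ^ n)
        (kern β n (E θ)) := kern_hasSum β (E θ) n (by rw [norm_mul, hE1]; simpa using hβ)
    have h2c : HasSum (fun q : ℕ => (starRingEnd ℂ)
        (((q + n).choose n : ℂ) * ((starRingEnd ℂ) β * E θ) ^ q * (E θ) ^ n))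
        ((starRingEnd ℂ) (kern β n (E θ))) :=
      h2.map (starRingEnd ℂ) (RCLike.continuous_conj (K := ℂ))
    have hSnorm1 : Summable (fun p : ℕ =>
        ‖((p + m).choose m : ℂ) * ((starRingEnd ℂ) α * E θ) ^ p * (E θ) ^ m‖) := by
      apply Sa.congr
      intro p
      simp [norm_mul, norm_pow, hE1]
    have hSnorm2 : Summable (fun q : ℕ => ‖(starRingEnd ℂ)
        (((q + n).choose n : ℂ) * ((starRingEnd ℂ) β * E θ) ^ q * (E θ) ^ n)‖) := by
      apply Sb.congr
      intro q
      simp [norm_mul, norm_pow, hE1, RCLike.norm_conj]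
    have hSprod := summable_mul_of_summable_norm
      (f := fun p : ℕ => ((p + m).choose m : ℂ) * ((starRingEnd ℂ) α * E θ) ^ p * (E θ) ^ m)
      (g := fun q : ℕ => (starRingEnd ℂ)
        (((q + n).choose n : ℂ) * ((starRingEnd ℂ) β * E θ) ^ q * (E θ) ^ n))
      hSnorm1 hSnorm2
    have H := h1.mul h2c hSprod
    exact H
  have key : HasSum (fun pq : ℕ × ℕ => ∫ θ in (0:ℝ)..(2*Real.pi), F pq θ)
      (∫ θ in (0:ℝ)..(2*Real.pi), kern α m (E θ) * (starRingEnd ℂ) (kern β n (E θ))) := by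
    simp only [hF]
    apply intervalIntegral.hasSum_integral_of_dominated_convergence
      (bound := fun pq _ => ((pq.1+m).choose m : ℝ) * ‖α‖ ^ pq.1 * (((pq.2+n).choose n : ℝ) * ‖β‖ ^ pq.2))
    · intro pq
      apply Continuous.aestronglyMeasurable
      apply Continuous.mul
      · exact (continuous_const.mul ((continuous_const.mul hEc).pow _)).mul (hEc.pow _)
      · exact (RCLike.continuous_conj (K := ℂ)).comp
          ((continuous_const.mul ((continuous_const.mul hEc).pow _)).mul (hEc.pow _))
    · intro pq
      filter_upwards with θ _
      exact le_of_eq (hnormF pq θ)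
    · filter_upwards with θ _
      exact Sbound
    · exact intervalIntegrable_const
    · filter_upwards with θ _
      exact hlim θ
  have hint : ∀ pq : ℕ × ℕ, (∫ θ in (0:ℝ)..(2*Real.pi), F pq θ) =
      if ((m + pq.1 : ℤ) = (n + pq.2 : ℤ)) then
        ((2*Real.pi : ℝ) : ℂ) * (((pq.1+m).choose m : ℂ) * ((pq.2+n).choose n : ℂ) *
          ((starRingEnd ℂ) α)^pq.1 * β^pq.2)
      else 0 := by
    rintro ⟨p, q⟩
    set k : ℤ := (m + p : ℤ) - (n + q : ℤ) with hk
    have hFrw : ∀ θ : ℝ, F (p, q) θ =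
        (((p+m).choose m : ℂ) * ((q+n).choose n : ℂ) * ((starRingEnd ℂ) α)^p * β^q) *
          Complex.exp ((k : ℂ) * θ * Complex.I) := by
      intro θ
      have hconjE : (starRingEnd ℂ) (E θ) = Complex.exp (-((θ:ℂ) * Complex.I)) := by
        rw [hE, ← Complex.exp_conj]
        congr 1
        simp [Complex.conj_ofReal]
      have hpow : ∀ j : ℕ, (E θ)^j = Complex.exp ((j:ℂ) * ((θ:ℂ) * Complex.I)) := by
        intro j; rw [hE, ← Complex.exp_nat_mul]
      have hcpow : ∀ j : ℕ, ((starRingEnd ℂ) (E θ))^j =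
          Complex.exp (-((j:ℂ) * ((θ:ℂ) * Complex.I))) := by
        intro j; rw [hconjE, ← Complex.exp_nat_mul]; ring_nf
      have step1 : F (p, q) θ =
          (((p+m).choose m : ℂ) * ((q+n).choose n : ℂ) * ((starRingEnd ℂ) α)^p * β^q) *
            ((E θ)^(p+m) * ((starRingEnd ℂ) (E θ))^(q+n)) := by
        simp only [hF, map_mul, map_pow, map_natCast, Complex.conj_conj, mul_pow, pow_add]
        ring
      rw [step1, hpow, hcpow, ← Complex.exp_add]
      congr 2
      rw [hk]
      push_cast
      ring
    rw [intervalIntegral.integral_congr (g := fun θ =>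
        (((p+m).choose m : ℂ) * ((q+n).choose n : ℂ) * ((starRingEnd ℂ) α)^p * β^q) *
          Complex.exp ((k : ℂ) * θ * Complex.I)) (fun θ _ => hFrw θ)]
    rw [intervalIntegral.integral_const_mul, orth k]
    have hcond : (k = 0) ↔ ((m + p : ℤ) = (n + q : ℤ)) := by rw [hk, sub_eq_zero]
    by_cases hc : (m + p : ℤ) = (n + q : ℤ)
    · rw [if_pos (hcond.mpr hc), if_pos hc]; ring
    · rw [if_neg (fun h => hc (hcond.mp h)), if_neg hc, mul_zero]
  have hfun : (fun pq : ℕ × ℕ =>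
      if ((m + pq.1 : ℤ) = (n + pq.2 : ℤ)) then
        ((2*Real.pi : ℝ) : ℂ) * (((pq.1+m).choose m : ℂ) * ((pq.2+n).choose n : ℂ) *
          ((starRingEnd ℂ) α)^pq.1 * β^pq.2)
      else 0) = fun pq : ℕ × ℕ => ∫ θ in (0:ℝ)..(2*Real.pi), F pq θ :=
    funext fun pq => (hint pq).symm
  rw [hfun]
  exact key






lemma prodmk_inj (k : ℕ) : Function.Injective (fun l : ℕ => ((k, l) : ℕ × ℕ)) :=
  fun a b h => by simpa using h

lemma prodmk_inj' (l : ℕ) : Function.Injective (fun p : ℕ => ((p, l) : ℕ × ℕ)) :=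
  fun a b h => by simpa using h

lemma coeff_eq (α β : ℂ) (hα : ‖α‖ < 1) (hβ : ‖β‖ < 1) (a : ℕ → ℕ → ℂ)
    (ε : ℝ) (hε : 0 < ε)
    (hsum : ∀ z ζ : ℂ, ‖z - α‖ < ε → ‖ζ - β‖ < ε →
      HasSum (fun p : ℕ × ℕ =>
        a p.1 p.2 * (z - α) ^ p.1 * ((starRingEnd ℂ) (ζ - β)) ^ p.2)
        (1 / (1 - z * (starRingEnd ℂ) ζ)))
    (m n : ℕ) :
    HasSum (fun p : ℕ => ((p+m).choose m : ℂ) * ((p+m).choose n : ℂ) *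
        ((starRingEnd ℂ) α)^p * β^(p+m-n))
      ((starRingEnd ℂ) (a m n)) := by
  set δ : ℝ := (1 - ‖β‖)/2 with hδdef
  have hδ : 0 < δ := by rw [hδdef]; linarith
  set r₀ : ℝ := min ε δ with hr₀def
  have hr₀ : 0 < r₀ := lt_min hε hδ
  have hr₀ε : r₀ ≤ ε := min_le_left _ _
  have hr₀δ : r₀ ≤ δ := min_le_right _ _
  -- basic facts for ζ near β
  have hζnorm : ∀ ζ : ℂ, ‖ζ - β‖ < r₀ → ‖ζ‖ < (1 + ‖β‖)/2 := by
    intro ζ hζ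
    have h1 : ‖ζ‖ - ‖β‖ ≤ ‖ζ - β‖ := norm_sub_norm_le ζ β
    have h2 : ‖ζ - β‖ < δ := lt_of_lt_of_le hζ hr₀δ
    rw [hδdef] at h2
    linarith
  have hζ1 : ∀ ζ : ℂ, ‖ζ - β‖ < r₀ → ‖ζ‖ < 1 := by
    intro ζ hζ
    have := hζnorm ζ hζ
    linarith
  -- Step C
  have stepC : ∀ ζ : ℂ, ‖ζ - β‖ < r₀ →
      HasSum (fun l : ℕ => (starRingEnd ℂ) (a m l) * (ζ - β)^l) (kern α m ζ) := by
    intro ζ hζ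
    set C : ℂ := (starRingEnd ℂ) (ζ - β) with hCdef
    set W : ℂ := (starRingEnd ℂ) ζ with hWdef
    have hWn : ‖W‖ = ‖ζ‖ := RCLike.norm_conj _
    have hαW : ‖α * W‖ < 1 := by
      rw [norm_mul, hWn]
      calc ‖α‖ * ‖ζ‖ ≤ ‖ζ‖ := mul_le_of_le_one_left (norm_nonneg _) hα.le
        _ < 1 := hζ1 ζ hζ
    have hden : 1 - ‖ζ‖ ≤ ‖1 - α * W‖ := by
      have h1 : ‖(1:ℂ)‖ - ‖α * W‖ ≤ ‖1 - α * W‖ := norm_sub_norm_le _ _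
      rw [norm_one] at h1
      have h2 : ‖α * W‖ ≤ ‖ζ‖ := by
        rw [norm_mul, hWn]
        exact mul_le_of_le_one_left (norm_nonneg _) hα.le
      linarith
    -- uniqueness in the z variable
    have hgz : ∀ w : ℂ, ‖w‖ < r₀ →
        HasSum (fun k : ℕ => (∑' l : ℕ, a k l * C^l) * w^k)
          ((fun z => 1 / (1 - z * W)) (α + w)) := by
      intro w hw
      have Hp := hsum (α + w) ζ (by simpa using lt_of_lt_of_le hw hr₀ε)
        (lt_of_lt_of_le hζ hr₀ε)
      simp only [add_sub_cancel_left] at Hp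
      have hfibS : ∀ k : ℕ, Summable (fun l : ℕ => a k l * w^k * C^l) := by
        intro k
        have h := Hp.summable.comp_injective (prodmk_inj k)
        exact h
      have hfib : ∀ k : ℕ, HasSum (fun l : ℕ => a k l * w^k * C^l)
          ((∑' l : ℕ, a k l * C^l) * w^k) := by
        intro k
        have h := (hfibS k).hasSum
        have heq : (∑' l : ℕ, a k l * w^k * C^l) = (∑' l : ℕ, a k l * C^l) * w^k := by
          rw [← tsum_mul_right]
          exact tsum_congr fun l => by ring
        rwa [heq] at h
      exact Hp.prod_fiberwise hfib
    have hez : ∀ w : ℂ, ‖w‖ < r₀ →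
        HasSum (fun k : ℕ => (W^k / (1 - α * W)^(k+1)) * w^k)
          ((fun z => 1 / (1 - z * W)) (α + w)) := by
      intro w hw
      have hu : ‖W * ((α + w) - α)‖ < ‖1 - α * W‖ := by
        rw [add_sub_cancel_left, norm_mul, hWn]
        have h1 : ‖ζ‖ * ‖w‖ ≤ ‖w‖ := mul_le_of_le_one_left (norm_nonneg _) (hζ1 ζ hζ).le
        have h2 : ‖w‖ < δ := lt_of_lt_of_le hw hr₀δ
        have h3 := hζnorm ζ hζ
        have h4 := hden
        rw [hδdef] at h2
        calc ‖ζ‖ * ‖w‖ ≤ ‖w‖ := h1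
          _ < (1 - ‖β‖)/2 := h2
          _ ≤ 1 - ‖ζ‖ := by linarith
          _ ≤ ‖1 - α * W‖ := hden
      have h := one_div_hasSum W α (α + w) hαW hu
      simpa only [add_sub_cancel_left] using h
    have hcoeff := coeff_unique (f := fun z => 1 / (1 - z * W)) (x := α) hr₀ hgz hez
    -- summability of the m-fiber without the w factor
    set w₀ : ℂ := ((r₀/2 : ℝ) : ℂ) with hw₀def
    have hw₀norm : ‖w₀‖ < r₀ := by
      rw [hw₀def, Complex.norm_real, Real.norm_eq_abs, abs_of_pos (by linarith)]
      linarith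
    have hw₀ne : w₀ ≠ 0 := by
      rw [hw₀def]
      exact_mod_cast ne_of_gt (by linarith : (0:ℝ) < r₀/2)
    have Hp := hsum (α + w₀) ζ (by simpa using lt_of_lt_of_le hw₀norm hr₀ε)
      (lt_of_lt_of_le hζ hr₀ε)
    simp only [add_sub_cancel_left] at Hp
    have hfibS : Summable (fun l : ℕ => a m l * w₀^m * C^l) := by
      have h := Hp.summable.comp_injective (prodmk_inj m)
      exact h
    have hSaml : Summable (fun l : ℕ => a m l * C^l) := by
      have h := hfibS.mul_right ((w₀^m)⁻¹)
      apply h.congr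
      intro l
      have hne : w₀^m ≠ 0 := pow_ne_zero _ hw₀ne
      field_simp
    have htsum : (∑' l : ℕ, a m l * C^l) = W^m / (1 - α * W)^(m+1) := congrFun hcoeff m
    have hSm : HasSum (fun l : ℕ => a m l * C^l) (W^m / (1 - α * W)^(m+1)) := by
      rw [← htsum]
      exact hSaml.hasSum
    have hconj := hSm.map (starRingEnd ℂ) (RCLike.continuous_conj (K := ℂ))
    have heq1 : ((starRingEnd ℂ) ∘ fun l : ℕ => a m l * C^l)
        = fun l : ℕ => (starRingEnd ℂ) (a m l) * (ζ - β)^l := by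
      funext l
      simp [hCdef, map_mul, map_pow, Complex.conj_conj]
    have heq2 : (starRingEnd ℂ) (W^m / (1 - α * W)^(m+1)) = kern α m ζ := by
      rw [hWdef, kern]
      simp [map_div₀, map_pow, map_sub, map_mul, map_one, Complex.conj_conj]
    rw [heq1, heq2] at hconj
    exact hconj
  -- Step D
  have stepD : ∀ ζ : ℂ, ‖ζ - β‖ < r₀ →
      HasSum (fun l : ℕ => (∑' p : ℕ, ((p+m).choose m : ℂ) * ((p+m).choose l : ℂ) *
          ((starRingEnd ℂ) α)^p * β^(p+m-l)) * (ζ - β)^l) (kern α m ζ)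
      ∧ ∀ l : ℕ, Summable (fun p : ℕ => ((p+m).choose m : ℂ) * ((p+m).choose l : ℂ) *
          ((starRingEnd ℂ) α)^p * β^(p+m-l) * (ζ - β)^l) := by
    intro ζ hζ
    set w : ℂ := ζ - β with hwdef
    set A : ℂ := (starRingEnd ℂ) α with hAdef
    set V : ℕ × ℕ → ℂ := fun pl =>
      ((pl.1+m).choose m : ℂ) * ((pl.1+m).choose pl.2 : ℂ) * A^pl.1 * β^(pl.1+m-pl.2) * w^pl.2
      with hVdef
    have hvanish : ∀ p : ℕ, ∀ l : ℕ, l ∉ Finset.range (p+m+1) → V (p, l) = 0 := by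
      intro p l hl
      rw [Finset.mem_range, not_lt] at hl
      have : (p+m).choose l = 0 := Nat.choose_eq_zero_of_lt (by omega)
      simp [hVdef, this]
    have hfib : ∀ p : ℕ, HasSum (fun l : ℕ => V (p, l))
        (((p+m).choose m : ℂ) * A^p * ζ^(p+m)) := by
      intro p
      have h := hasSum_sum_of_ne_finset_zero (L := SummationFilter.unconditional ℕ) (s := Finset.range (p+m+1)) (hvanish p)
      have heq : ∑ l ∈ Finset.range (p+m+1), V (p, l)
          = ((p+m).choose m : ℂ) * A^p * ζ^(p+m) := by
        have hb : (w + β)^(p+m) = ∑ l ∈ Finset.range (p+m+1),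
            w^l * β^((p+m)-l) * ((p+m).choose l : ℂ) := add_pow w β (p+m)
        have : ∑ l ∈ Finset.range (p+m+1), V (p, l)
            = ((p+m).choose m : ℂ) * A^p * ∑ l ∈ Finset.range (p+m+1),
              w^l * β^((p+m)-l) * ((p+m).choose l : ℂ) := by
          rw [Finset.mul_sum]
          exact Finset.sum_congr rfl fun l _ => by rw [hVdef]; ring
        rw [this, ← hb, hwdef, sub_add_cancel]
      rwa [heq] at h
    -- norm summability
    have hw1 : ‖w‖ + ‖β‖ < 1 := by
      have h2 : ‖w‖ < δ := lt_of_lt_of_le hζ hr₀δ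
      rw [hδdef] at h2
      linarith
    have hsnn : (0:ℝ) ≤ ‖w‖ + ‖β‖ := by positivity
    have hαs : ‖α‖ * (‖w‖ + ‖β‖) < 1 :=
      lt_of_le_of_lt (mul_le_of_le_one_left hsnn hα.le) hw1
    have hNfib : ∀ p : ℕ, (∑' l : ℕ, ‖V (p, l)‖)
        = ((p+m).choose m : ℝ) * ‖α‖^p * (‖w‖ + ‖β‖)^(p+m) := by
      intro p
      rw [tsum_eq_sum (s := Finset.range (p+m+1)) (fun l hl => by rw [hvanish p l hl, norm_zero])]
      have hb : (‖w‖ + ‖β‖)^(p+m) = ∑ l ∈ Finset.range (p+m+1),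
          ‖w‖^l * ‖β‖^((p+m)-l) * ((p+m).choose l : ℝ) := add_pow _ _ _
      rw [hb, Finset.mul_sum]
      refine Finset.sum_congr rfl fun l _ => ?_
      rw [hVdef]
      simp only [norm_mul, norm_pow, Complex.norm_natCast]
      rw [hAdef, RCLike.norm_conj]
      ring
    have hSb : Summable (fun p : ℕ => ((p+m).choose m : ℝ) * ‖α‖^p * (‖w‖ + ‖β‖)^(p+m)) := by
      have hbase := summable_choose_mul_geometric_of_norm_lt_one (R := ℝ) m
        (r := ‖α‖ * (‖w‖ + ‖β‖)) (by rwa [Real.norm_eq_abs, _root_.abs_of_nonneg (by positivity)])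
      have h := hbase.mul_left ((‖w‖ + ‖β‖)^m)
      apply h.congr
      intro p
      rw [mul_pow, pow_add]
      ring
    have hSN : Summable (fun pl : ℕ × ℕ => ‖V pl‖) := by
      apply (summable_prod_of_nonneg (fun pl => norm_nonneg _)).mpr
      constructor
      · intro p
        exact summable_of_ne_finset_zero (s := Finset.range (p+m+1))
          (fun l hl => by rw [hvanish p l hl, norm_zero])
      · apply hSb.congr
        intro p
        exact (hNfib p).symm
    have hSV : Summable V := hSN.of_norm
    have hkern : HasSum (fun p : ℕ => ((p+m).choose m : ℂ) * A^p * ζ^(p+m)) (kern α m ζ) := by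
      have hc : ‖A * ζ‖ < 1 := by
        rw [hAdef, norm_mul, RCLike.norm_conj]
        calc ‖α‖ * ‖ζ‖ ≤ ‖ζ‖ := mul_le_of_le_one_left (norm_nonneg _) hα.le
          _ < 1 := hζ1 ζ hζ
      have h := kern_hasSum α ζ m (by rw [hAdef] at hc; exact hc)
      have heq : (fun p : ℕ => ((p + m).choose m : ℂ) * ((starRingEnd ℂ) α * ζ) ^ p * ζ ^ m)
          = fun p : ℕ => ((p+m).choose m : ℂ) * A^p * ζ^(p+m) := by
        funext p
        rw [hAdef, mul_pow, pow_add]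
        ring
      rwa [heq] at h
    have hVsum : HasSum V (kern α m ζ) := by
      have h1 := hSV.hasSum
      have h2 := h1.prod_fiberwise hfib
      rwa [h2.unique hkern] at h1
    have hVswap : HasSum (fun lp : ℕ × ℕ => V (lp.2, lp.1)) (kern α m ζ) := by
      have h := ((Equiv.prodComm ℕ ℕ).hasSum_iff (f := V)).mpr hVsum
      have heqs : (V ∘ (Equiv.prodComm ℕ ℕ)) = fun lp : ℕ × ℕ => V (lp.2, lp.1) := by
        funext lp
        simp [Equiv.prodComm_apply, Function.comp, Prod.swap]
      rwa [heqs] at h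
    have hfibl : ∀ l : ℕ, Summable (fun p : ℕ => V (p, l)) := by
      intro l
      have h := hSV.comp_injective (prodmk_inj' l)
      exact h
    constructor
    · apply hVswap.prod_fiberwise
      intro l
      have h := (hfibl l).hasSum
      have heq : (∑' p : ℕ, V (p, l))
          = (∑' p : ℕ, ((p+m).choose m : ℂ) * ((p+m).choose l : ℂ) * A^p * β^(p+m-l)) * w^l := by
        rw [← tsum_mul_right]
      rwa [heq] at h
    · intro l
      exact hfibl l
  -- apply uniqueness at β
  have hC' : ∀ w : ℂ, ‖w‖ < r₀ →
      HasSum (fun l : ℕ => (starRingEnd ℂ) (a m l) * w^l) (kern α m (β + w)) := by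
    intro w hw
    have h := stepC (β + w) (by simpa using hw)
    simpa only [add_sub_cancel_left] using h
  have hD' : ∀ w : ℂ, ‖w‖ < r₀ →
      HasSum (fun l : ℕ => (∑' p : ℕ, ((p+m).choose m : ℂ) * ((p+m).choose l : ℂ) *
          ((starRingEnd ℂ) α)^p * β^(p+m-l)) * w^l) (kern α m (β + w)) := by
    intro w hw
    have h := (stepD (β + w) (by simpa using hw)).1
    simpa only [add_sub_cancel_left] using h
  have hfinal := coeff_unique (f := fun ζ => kern α m ζ) (x := β) hr₀ hC' hD'
  have hval : (starRingEnd ℂ) (a m n) = ∑' p : ℕ, ((p+m).choose m : ℂ) * ((p+m).choose n : ℂ) *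
      ((starRingEnd ℂ) α)^p * β^(p+m-n) := congrFun hfinal n
  -- summability of the coefficient series
  set w₁ : ℂ := ((r₀/2 : ℝ) : ℂ) with hw₁def
  have hw₁norm : ‖(β + w₁) - β‖ < r₀ := by
    rw [add_sub_cancel_left, hw₁def, Complex.norm_real, Real.norm_eq_abs,
      abs_of_pos (by linarith)]
    linarith
  have hw₁ne : w₁ ≠ 0 := by
    rw [hw₁def]
    exact_mod_cast ne_of_gt (by linarith : (0:ℝ) < r₀/2)
  have hSfib := (stepD (β + w₁) hw₁norm).2 n
  simp only [add_sub_cancel_left] at hSfib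
  have hSu : Summable (fun p : ℕ => ((p+m).choose m : ℂ) * ((p+m).choose n : ℂ) *
      ((starRingEnd ℂ) α)^p * β^(p+m-n)) := by
    have h := hSfib.mul_right ((w₁^n)⁻¹)
    apply h.congr
    intro p
    have hne : w₁^n ≠ 0 := pow_ne_zero _ hw₁ne
    field_simp
  rw [hval]
  exact hSu.hasSum





theorem stmt11 (α β : ℂ) (hα : ‖α‖ < 1) (hβ : ‖β‖ < 1) (a : ℕ → ℕ → ℂ)
    (ε : ℝ) (hε : 0 < ε)
    (hsum : ∀ z ζ : ℂ, ‖z - α‖ < ε → ‖ζ - β‖ < ε →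
      HasSum (fun p : ℕ × ℕ =>
        a p.1 p.2 * (z - α) ^ p.1 * ((starRingEnd ℂ) (ζ - β)) ^ p.2)
        (1 / (1 - z * (starRingEnd ℂ) ζ)))
    (m n : ℕ) :
    (2 * Real.pi)⁻¹ • ∫ θ in (0:ℝ)..(2 * Real.pi),
        kern α m (Complex.exp (θ * Complex.I)) *
          (starRingEnd ℂ) (kern β n (Complex.exp (θ * Complex.I))) =
      (starRingEnd ℂ) (a m n) := by
  set M : ℕ := max m n with hM
  have hmM : m ≤ M := le_max_left m n
  have hnM : n ≤ M := le_max_right m n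
  set u : ℕ → ℂ := fun p => ((p+m).choose m : ℂ) * ((p+m).choose n : ℂ) *
      ((starRingEnd ℂ) α)^p * β^(p+m-n) with hu
  set P : ℕ × ℕ → ℂ := fun pq =>
      if ((m + pq.1 : ℤ) = (n + pq.2 : ℤ)) then
        ((2*Real.pi : ℝ) : ℂ) * (((pq.1+m).choose m : ℂ) * ((pq.2+n).choose n : ℂ) *
          ((starRingEnd ℂ) α)^pq.1 * β^pq.2)
      else 0 with hP
  set j : ℕ → ℕ × ℕ := fun k => (M + k - m, M + k - n) with hj
  set i : ℕ → ℕ := fun k => M + k - m with hi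
  have hjinj : Function.Injective j := by
    intro k₁ k₂ h
    rw [hj] at h
    have h1 := congrArg Prod.fst h
    simp only at h1
    omega
  have hiinj : Function.Injective i := by
    intro k₁ k₂ h
    rw [hi] at h
    simp only at h
    omega
  have hPvanish : ∀ pq : ℕ × ℕ, pq ∉ Set.range j → P pq = 0 := by
    intro pq hpq
    rw [hP]
    by_cases hc : ((m + pq.1 : ℤ) = (n + pq.2 : ℤ))
    · exfalso
      apply hpq
      have hc' : m + pq.1 = n + pq.2 := by exact_mod_cast hc
      refine ⟨m + pq.1 - M, ?_⟩
      rw [hj]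
      have : M ≤ m + pq.1 := by omega
      ext <;> simp <;> omega
    · exact if_neg hc
  have huvanish : ∀ p : ℕ, p ∉ Set.range i → u p = 0 := by
    intro p hp
    have hlt : p + m < n := by
      by_contra hge
      apply hp
      refine ⟨p - (M - m), ?_⟩
      show M + (p - (M - m)) - m = p
      omega
    rw [hu]
    simp only
    rw [Nat.choose_eq_zero_of_lt (by omega : p + m < n)]
    simp
  have hPj : ∀ k : ℕ, P (j k) = ((2*Real.pi : ℝ) : ℂ) * u (i k) := by
    intro k
    rw [hP, hj, hi, hu]
    simp only
    have e1 : (M + k - m) + m = M + k := by omega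
    have e2 : (M + k - n) + n = M + k := by omega
    have e3 : (M + k - m) + m - n = M + k - n := by omega
    have hcond : ((m:ℤ) + ((M + k - m : ℕ) : ℤ) = (n:ℤ) + ((M + k - n : ℕ) : ℤ)) := by omega
    rw [if_pos hcond, e1, e2]
  have hint := integral_hasSum α β hα hβ m n
  rw [← hP] at hint
  have hPcomp : HasSum (P ∘ j)
      (∫ θ in (0:ℝ)..(2*Real.pi), kern α m (Complex.exp (θ*Complex.I)) *
        (starRingEnd ℂ) (kern β n (Complex.exp (θ*Complex.I)))) :=
    (hjinj.hasSum_iff hPvanish).mpr hint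
  have hcoeff := coeff_eq α β hα hβ a ε hε hsum m n
  rw [← hu] at hcoeff
  have hucomp : HasSum (u ∘ i) ((starRingEnd ℂ) (a m n)) :=
    (hiinj.hasSum_iff huvanish).mpr hcoeff
  have hmul := hucomp.mul_left ((2*Real.pi : ℝ) : ℂ)
  have hfe : P ∘ j = fun k => ((2*Real.pi : ℝ) : ℂ) * (u ∘ i) k := funext fun k => hPj k
  rw [hfe] at hPcomp
  have hval := hPcomp.unique hmul
  rw [hval, Complex.real_smul, ← mul_assoc, ← Complex.ofReal_mul,
    inv_mul_cancel₀ (by positivity : (2 * Real.pi) ≠ 0), Complex.ofReal_one, one_mul]
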